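/- Fix a permutation π of V. For every J ∈ V, the group algebra element F̄_J is a unit of order at most two: F̄_J * F̄_J = 1 in AddMonoidAlgebra ℝ V. -/

import Mathlib

open Finset

/-- The sign (-1)^{u·v} ∈ ℝ. -/
noncomputable def sgn {n : ℕ} (u v : Fin n → ZMod 2) : ℝ :=
  if (∑ i, u i * v i) = (1 : ZMod 2) then -1 else 1

/-- Fourier coefficient a^J_I, for a permutation π of V = Fin n → ZMod 2. -/
noncomputable def fc {n : ℕ} (π : Equiv.Perm (Fin n → ZMod 2))
    (J I : Fin n → ZMod 2) : ℝ :=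
  (1 / 2 ^ n) * ∑ x : Fin n → ZMod 2, sgn I x * sgn (π x) J

/-- The group algebra element F̄_J ∈ AddMonoidAlgebra ℝ V whose coefficient at g is a^J_g. -/
noncomputable def Fbar {n : ℕ} (π : Equiv.Perm (Fin n → ZMod 2))
    (J : Fin n → ZMod 2) : AddMonoidAlgebra ℝ (Fin n → ZMod 2) :=
  ∑ g : Fin n → ZMod 2, AddMonoidAlgebra.single g (fc π J g)

section Aux

variable {n : ℕ}

lemma zmod2_cases : ∀ a : ZMod 2, a = 0 ∨ a = 1 := by decide

lemma chi_add (a b : ZMod 2) :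
    (if a + b = 1 then (-1 : ℝ) else 1)
      = (if a = 1 then (-1 : ℝ) else 1) * (if b = 1 then (-1 : ℝ) else 1) := by
  rcases zmod2_cases a with ha | ha <;> rcases zmod2_cases b with hb | hb <;>
    subst ha <;> subst hb <;> norm_num <;> decide

lemma sgn_comm (u v : Fin n → ZMod 2) : sgn u v = sgn v u := by
  simp only [sgn, mul_comm]

lemma sgn_add_right (u v w : Fin n → ZMod 2) :
    sgn u (v + w) = sgn u v * sgn u w := by
  have h : (∑ i, u i * (v + w) i) = (∑ i, u i * v i) + ∑ i, u i * w i := by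
    rw [← Finset.sum_add_distrib]
    exact Finset.sum_congr rfl fun i _ => by simp [mul_add]
  unfold sgn
  rw [h, chi_add]

lemma sgn_add_left (u v w : Fin n → ZMod 2) :
    sgn (u + v) w = sgn u w * sgn v w := by
  rw [sgn_comm, sgn_add_right, sgn_comm w u, sgn_comm w v]

lemma sgn_sq (u v : Fin n → ZMod 2) : sgn u v * sgn u v = 1 := by
  unfold sgn; split <;> norm_num

lemma vadd_self (g : Fin n → ZMod 2) : g + g = 0 := by
  funext i
  rcases zmod2_cases (g i) with h | h <;> simp [h] <;> decide

lemma vadd_eq_zero_iff (x y : Fin n → ZMod 2) : x + y = 0 ↔ x = y := by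
  constructor
  · intro h
    calc x = x + (y + y) := by rw [vadd_self, add_zero]
    _ = (x + y) + y := by rw [add_assoc]
    _ = y := by rw [h, zero_add]
  · rintro rfl; exact vadd_self _

lemma sum_sgn (u : Fin n → ZMod 2) :
    ∑ g : Fin n → ZMod 2, sgn g u = if u = 0 then (2 ^ n : ℝ) else 0 := by
  by_cases hu : u = 0
  · subst hu
    rw [if_pos rfl]
    have h1 : ∀ g : Fin n → ZMod 2, sgn g (0 : Fin n → ZMod 2) = 1 := by
      intro g; simp [sgn]
    simp only [h1, Finset.sum_const, Finset.card_univ, nsmul_eq_mul, mul_one]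
    simp [Fintype.card_fun]
  · rw [if_neg hu]
    obtain ⟨i, hi⟩ : ∃ i, u i ≠ 0 := by
      by_contra h
      push_neg at h
      exact hu (funext fun i => h i)
    have hui : u i = 1 := by
      rcases zmod2_cases (u i) with h | h
      · exact absurd h hi
      · exact h
    set e : Fin n → ZMod 2 := Pi.single i 1 with he
    have hse : sgn e u = -1 := by
      have hsum : (∑ j, e j * u j) = u i := by
        have h2 : ∀ j, e j * u j = if j = i then u j else 0 := by
          intro j
          by_cases h : j = i <;> simp [he, Pi.single_apply, h]
        simp only [h2]
        simp
      unfold sgn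
      rw [hsum, if_pos hui]
    have key : ∑ g : Fin n → ZMod 2, sgn g u
        = ∑ g : Fin n → ZMod 2, sgn (e + g) u :=
      Fintype.sum_equiv (Equiv.addLeft e) _ _ fun g => by
        show sgn g u = sgn (e + (e + g)) u
        rw [← add_assoc, vadd_self, zero_add]
    have h3 : ∀ g : Fin n → ZMod 2, sgn (e + g) u = - sgn g u := by
      intro g
      rw [sgn_add_left, hse, neg_one_mul]
    rw [Finset.sum_congr rfl fun g _ => h3 g, Finset.sum_neg_distrib] at key
    linarith

lemma fc_key {n : ℕ} (π : Equiv.Perm (Fin n → ZMod 2)) (J k : Fin n → ZMod 2) :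
    ∑ g : Fin n → ZMod 2, fc π J g * fc π J (g + k)
      = if k = 0 then (1 : ℝ) else 0 := by
  have h2n : (2 : ℝ) ^ n ≠ 0 := by positivity
  unfold fc
  have step1 : ∀ g : Fin n → ZMod 2,
      ((1 / 2 ^ n : ℝ) * ∑ x : Fin n → ZMod 2, sgn g x * sgn (π x) J)
        * ((1 / 2 ^ n : ℝ) * ∑ y : Fin n → ZMod 2, sgn (g + k) y * sgn (π y) J)
      = (1 / 2 ^ n : ℝ) * (1 / 2 ^ n : ℝ) *
          ∑ x : Fin n → ZMod 2, ∑ y : Fin n → ZMod 2,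
            (sgn g x * sgn (π x) J) * (sgn (g + k) y * sgn (π y) J) := by
    intro g
    rw [mul_mul_mul_comm, Finset.sum_mul_sum]
  simp only [step1]
  rw [← Finset.mul_sum]
  rw [Finset.sum_comm]
  have step2 : ∀ x : Fin n → ZMod 2,
      ∑ g : Fin n → ZMod 2, ∑ y : Fin n → ZMod 2,
          (sgn g x * sgn (π x) J) * (sgn (g + k) y * sgn (π y) J)
        = (2 ^ n : ℝ) * sgn k x := by
    intro x
    rw [Finset.sum_comm]
    have inner : ∀ y : Fin n → ZMod 2,
        ∑ g : Fin n → ZMod 2, (sgn g x * sgn (π x) J) * (sgn (g + k) y * sgn (π y) J)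
          = if x = y then (2 ^ n : ℝ) * (sgn (π x) J * (sgn k y * sgn (π y) J)) else 0 := by
      intro y
      have hterm : ∀ g : Fin n → ZMod 2,
          (sgn g x * sgn (π x) J) * (sgn (g + k) y * sgn (π y) J)
            = sgn g (x + y) * (sgn (π x) J * (sgn k y * sgn (π y) J)) := by
        intro g
        rw [sgn_add_left g k y,
          show sgn g x * sgn (π x) J * (sgn g y * sgn k y * sgn (π y) J)
            = (sgn g x * sgn g y) * (sgn (π x) J * (sgn k y * sgn (π y) J)) from by ring,
          ← sgn_add_right]
      simp only [hterm]
      rw [← Finset.sum_mul]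
      have : ∑ g : Fin n → ZMod 2, sgn g (x + y)
          = if x = y then (2 ^ n : ℝ) else 0 := by
        rw [sum_sgn]
        simp only [vadd_eq_zero_iff]
      rw [this]
      split <;> ring
    simp only [inner]
    rw [Finset.sum_ite_eq Finset.univ x
      (fun y => (2 ^ n : ℝ) * (sgn (π x) J * (sgn k y * sgn (π y) J))), if_pos (Finset.mem_univ x)]
    have : sgn (π x) J * (sgn k x * sgn (π x) J)
        = (sgn (π x) J * sgn (π x) J) * sgn k x := by ring
    rw [this, sgn_sq, one_mul]
  simp only [step2]
  rw [← Finset.mul_sum]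
  have : ∑ x : Fin n → ZMod 2, sgn k x = if k = 0 then (2 ^ n : ℝ) else 0 := by
    rw [Finset.sum_congr rfl fun x _ => sgn_comm k x, sum_sgn]
  rw [this]
  split
  · field_simp
  · ring

end Aux

/-- Each F̄_J is a unit of order at most two in the group algebra. -/
theorem Fbar_sq_eq_one {n : ℕ} (hn : 1 ≤ n) (π : Equiv.Perm (Fin n → ZMod 2))
    (J : Fin n → ZMod 2) : Fbar π J * Fbar π J = 1 := by
  classical
  unfold Fbar
  rw [Finset.sum_mul_sum]
  have step1 : ∀ g h : Fin n → ZMod 2,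
      AddMonoidAlgebra.single g (fc π J g) * AddMonoidAlgebra.single h (fc π J h)
        = AddMonoidAlgebra.single (g + h) (fc π J g * fc π J h) := fun g h =>
    AddMonoidAlgebra.single_mul_single _ _ _ _
  simp only [step1]
  have step2 : ∀ g : Fin n → ZMod 2,
      (∑ h : Fin n → ZMod 2, AddMonoidAlgebra.single (g + h) (fc π J g * fc π J h))
        = ∑ m : Fin n → ZMod 2, AddMonoidAlgebra.single m (fc π J g * fc π J (g + m)) := by
    intro g
    refine Fintype.sum_equiv (Equiv.addLeft g) _ _ fun m => ?_
    have h5 : g + (g + m) = m := by rw [← add_assoc, vadd_self, zero_add]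
    simp only [Equiv.coe_addLeft]
    rw [h5]
  simp only [step2]
  rw [Finset.sum_comm]
  have step3 : ∀ m : Fin n → ZMod 2,
      (∑ g : Fin n → ZMod 2, AddMonoidAlgebra.single m (fc π J g * fc π J (g + m)))
        = AddMonoidAlgebra.single m (if m = 0 then (1 : ℝ) else 0) := by
    intro m
    rw [show (∑ g : Fin n → ZMod 2, AddMonoidAlgebra.single m (fc π J g * fc π J (g + m)))
        = AddMonoidAlgebra.single m (∑ g : Fin n → ZMod 2, fc π J g * fc π J (g + m)) from
      (map_sum (AddMonoidAlgebra.singleAddHom m) _ _).symm, fc_key]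
  simp only [step3]
  have step4 : ∀ m : Fin n → ZMod 2,
      AddMonoidAlgebra.single m (if m = 0 then (1 : ℝ) else 0)
        = if m = 0 then AddMonoidAlgebra.single (0 : Fin n → ZMod 2) (1 : ℝ) else 0 := by
    intro m
    split
    · subst ‹m = 0›; rfl
    · exact AddMonoidAlgebra.single_zero m
  simp only [step4]
  rw [Finset.sum_ite_eq' Finset.univ (0 : Fin n → ZMod 2)
    (fun _ => AddMonoidAlgebra.single (0 : Fin n → ZMod 2) (1 : ℝ)),
    if_pos (Finset.mem_univ _)]
  exact (AddMonoidAlgebra.one_def).symm
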